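/- Let N ≥ 2 and η_α = exp(2πiα/N) for α = 1,…,N-1. For every integer m with 0 ≤ m ≤ N, one has ∑_{α=1}^{N-1} η_α^m/|η_α - 1|² = (N²-1)/12 - m(N-m)/2, where |z|² = z·z̄. -/

import Mathlib

open Finset Complex

noncomputable def η (N α : ℕ) : ℂ := Complex.exp (2 * Real.pi * Complex.I * α / N)

lemma eta_ne_zero (N α : ℕ) : η N α ≠ 0 := Complex.exp_ne_zero _

lemma eta_eq_pow (N α : ℕ) : η N α = η N 1 ^ α := by
  rw [η, η, ← Complex.exp_nat_mul]
  congr 1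
  push_cast
  ring

lemma eta_pow_N (N α : ℕ) (hN : 2 ≤ N) : η N α ^ N = 1 := by
  have hN0 : (N : ℂ) ≠ 0 := Nat.cast_ne_zero.mpr (by omega)
  rw [η, ← Complex.exp_nat_mul]
  have : (N : ℂ) * (2 * Real.pi * Complex.I * α / N) = (α : ℂ) * (2 * Real.pi * Complex.I) := by
    field_simp
  rw [this, Complex.exp_nat_mul, Complex.exp_two_pi_mul_I, one_pow]

lemma eta_ne_one (N α : ℕ) (hN : 2 ≤ N) (h1 : 1 ≤ α) (h2 : α ≤ N - 1) : η N α ≠ 1 := by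
  have hN0 : (N : ℂ) ≠ 0 := Nat.cast_ne_zero.mpr (by omega)
  intro h
  rw [η, Complex.exp_eq_one_iff] at h
  obtain ⟨n, hn⟩ := h
  rw [div_eq_iff hN0] at hn
  have key : (2 * (Real.pi:ℂ) * Complex.I) * (α : ℂ) = (2 * (Real.pi:ℂ) * Complex.I) * ((n : ℂ) * N) := by
    linear_combination hn
  have hα : (α : ℂ) = (n : ℂ) * N := mul_left_cancel₀ Complex.two_pi_I_ne_zero key
  have hz : (α : ℤ) = n * (N : ℤ) := by exact_mod_cast hα
  have hd : (N : ℤ) ∣ (α : ℤ) := ⟨n, by linarith⟩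
  have hle : (N : ℤ) ≤ (α : ℤ) := Int.le_of_dvd (by exact_mod_cast h1) hd
  omega

lemma eta_conj (N α : ℕ) : (starRingEnd ℂ) (η N α) = (η N α)⁻¹ := by
  rw [η, ← Complex.exp_conj, ← Complex.exp_neg]
  congr 1
  simp [map_div₀, Complex.conj_I, map_ofNat]
  ring

lemma normSq_eta (N α : ℕ) :
    ((Complex.normSq (η N α - 1) : ℝ) : ℂ) = (η N α - 1) * ((η N α)⁻¹ - 1) := by
  rw [← Complex.mul_conj, map_sub, map_one, eta_conj]

lemma eta_inv_ne_one (N α : ℕ) (hN : 2 ≤ N) (h1 : 1 ≤ α) (h2 : α ≤ N - 1) :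
    (η N α)⁻¹ ≠ 1 := by
  rw [Ne, inv_eq_one]
  exact eta_ne_one N α hN h1 h2

lemma normSq_eta_ne_zero (N α : ℕ) (hN : 2 ≤ N) (h1 : 1 ≤ α) (h2 : α ≤ N - 1) :
    ((Complex.normSq (η N α - 1) : ℝ) : ℂ) ≠ 0 := by
  rw [normSq_eta]
  exact mul_ne_zero (sub_ne_zero.mpr (eta_ne_one N α hN h1 h2))
    (sub_ne_zero.mpr (eta_inv_ne_one N α hN h1 h2))

lemma eta_compl (N α : ℕ) (hN : 2 ≤ N) (hαN : α ≤ N) : η N (N - α) = (η N α)⁻¹ := by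
  have hN0 : (N : ℂ) ≠ 0 := Nat.cast_ne_zero.mpr (by omega)
  refine eq_inv_of_mul_eq_one_left ?_
  rw [η, η, ← Complex.exp_add]
  have : 2 * (Real.pi:ℂ) * Complex.I * ((N - α : ℕ) : ℂ) / N + 2 * Real.pi * Complex.I * α / N
      = (2 * Real.pi * Complex.I) := by
    rw [Nat.cast_sub hαN]
    field_simp
    ring
  rw [this, Complex.exp_two_pi_mul_I]

lemma sum_eta_pow (N : ℕ) (hN : 2 ≤ N) (k : ℕ) (hk1 : 1 ≤ k) (hk2 : k ≤ N - 1) :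
    ∑ α ∈ Finset.Icc 1 (N - 1), (η N α) ^ k = -1 := by
  have hterm : ∀ α, (η N α) ^ k = (η N k) ^ α := by
    intro α
    rw [eta_eq_pow N α, eta_eq_pow N k, ← pow_mul, ← pow_mul, Nat.mul_comm]
  simp only [hterm]
  have hIcc : Finset.Icc 1 (N - 1) = Finset.Ico 1 N := by
    rw [← Finset.Ico_add_one_right_eq_Icc]
    congr 1
    omega
  have hgeom : ∑ α ∈ Finset.range N, (η N k) ^ α = 0 := by
    rw [geom_sum_eq (eta_ne_one N k hN hk1 hk2), eta_pow_N N k hN, sub_self, zero_div]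
  have hsplit := Finset.sum_Ico_consecutive (fun α => (η N k) ^ α)
    (Nat.zero_le 1) (by omega : 1 ≤ N)
  rw [hIcc]
  rw [Finset.range_eq_Ico] at hgeom
  have h01 : ∑ α ∈ Finset.Ico 0 1, (η N k) ^ α = 1 := by simp
  have := hsplit
  rw [hgeom, h01] at this
  linear_combination this
noncomputable def fseq (N : ℕ) (m : ℤ) : ℂ :=
  ∑ α ∈ Finset.Icc 1 (N - 1), (η N α) ^ m / (Complex.normSq (η N α - 1) : ℂ)

noncomputable def gseq (N : ℕ) (m : ℤ) : ℂ :=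
  ((N : ℂ) ^ 2 - 1) / 12 - (m : ℂ) * ((N : ℂ) - (m : ℂ)) / 2

lemma sum_nat_cast (n : ℕ) : ∑ k ∈ Finset.range n, (k : ℂ) = n * ((n : ℂ) - 1) / 2 := by
  induction n with
  | zero => simp
  | succ n ih => rw [Finset.sum_range_succ, ih]; push_cast; ring

lemma sum_sq_cast (n : ℕ) :
    ∑ k ∈ Finset.range n, (k : ℂ) ^ 2 = n * ((n : ℂ) - 1) * (2 * n - 1) / 6 := by
  induction n with
  | zero => simp
  | succ n ih => rw [Finset.sum_range_succ, ih]; push_cast; ring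

lemma sum_gseq (N : ℕ) : ∑ k ∈ Finset.range N, gseq N (k : ℤ) = 0 := by
  have h1 := sum_nat_cast N
  have h2 := sum_sq_cast N
  simp only [gseq, Int.cast_natCast]
  rw [Finset.sum_sub_distrib, Finset.sum_const, Finset.card_range, nsmul_eq_mul]
  have h3 : ∑ k ∈ Finset.range N, (k : ℂ) * ((N : ℂ) - k) / 2
      = (N : ℂ) * (∑ k ∈ Finset.range N, (k : ℂ)) / 2
        - (∑ k ∈ Finset.range N, (k : ℂ) ^ 2) / 2 := by
    rw [div_sub_div_same, ← Finset.sum_div, Finset.mul_sum, ← Finset.sum_sub_distrib]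
    congr 1
    refine Finset.sum_congr rfl fun k _ => by ring
  rw [h3, h1, h2]
  ring

lemma sum_fseq (N : ℕ) (hN : 2 ≤ N) : ∑ k ∈ Finset.range N, fseq N (k : ℤ) = 0 := by
  simp only [fseq]
  rw [Finset.sum_comm]
  refine Finset.sum_eq_zero fun α hα => ?_
  rw [Finset.mem_Icc] at hα
  rw [← Finset.sum_div]
  have : ∑ k ∈ Finset.range N, (η N α) ^ (k : ℤ) = 0 := by
    have : ∀ k : ℕ, (η N α) ^ (k : ℤ) = (η N α) ^ k := fun k => zpow_natCast _ k
    simp only [this]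
    rw [geom_sum_eq (eta_ne_one N α hN hα.1 hα.2), eta_pow_N N α hN, sub_self, zero_div]
  rw [this, zero_div]

lemma fseq_rec (N : ℕ) (hN : 2 ≤ N) (m : ℤ) (hm1 : 1 ≤ m) (hm2 : m ≤ (N : ℤ) - 1) :
    fseq N (m + 1) + fseq N (m - 1) - 2 * fseq N m = 1 := by
  have key : fseq N (m + 1) + fseq N (m - 1) - 2 * fseq N m
      = ∑ α ∈ Finset.Icc 1 (N - 1), -((η N α) ^ m) := by
    simp only [fseq]
    rw [← Finset.sum_add_distrib, Finset.mul_sum, ← Finset.sum_sub_distrib]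
    refine Finset.sum_congr rfl fun α hα => ?_
    rw [Finset.mem_Icc] at hα
    have h0 := eta_ne_zero N α
    have h1 : η N α - 1 ≠ 0 := sub_ne_zero.mpr (eta_ne_one N α hN hα.1 hα.2)
    have h2 : (η N α)⁻¹ - 1 ≠ 0 := sub_ne_zero.mpr (eta_inv_ne_one N α hN hα.1 hα.2)
    have h1' : 1 - η N α ≠ 0 := fun h => h1 (by linear_combination -h)
    have hinv : (η N α)⁻¹ - 1 = (1 - η N α) / η N α := by field_simp
    rw [normSq_eta, zpow_add₀ h0, zpow_sub₀ h0, zpow_one, hinv]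
    field_simp
    ring
  rw [key]
  have hm' : m = ((m.toNat : ℕ) : ℤ) := by omega
  rw [Finset.sum_neg_distrib]
  have : ∑ α ∈ Finset.Icc 1 (N - 1), (η N α) ^ m = -1 := by
    rw [hm']
    simp only [zpow_natCast]
    exact sum_eta_pow N hN m.toNat (by omega) (by omega)
  rw [this]
  ring

lemma fseq_one_sub (N : ℕ) (hN : 2 ≤ N) : fseq N 1 - fseq N 0 = -((N : ℂ) - 1) / 2 := by
  set t : ℕ → ℂ := fun α => (η N α - 1) / (Complex.normSq (η N α - 1) : ℂ) with ht
  have hS : fseq N 1 - fseq N 0 = ∑ α ∈ Finset.Icc 1 (N - 1), t α := by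
    simp only [fseq, zpow_one, zpow_zero]
    rw [← Finset.sum_sub_distrib]
    refine Finset.sum_congr rfl fun α _ => ?_
    rw [ht]
    rw [div_sub_div_same]
  have hrev : ∑ α ∈ Finset.Icc 1 (N - 1), t α
      = ∑ α ∈ Finset.Icc 1 (N - 1), t (N - α) := by
    refine Finset.sum_nbij' (fun α => N - α) (fun α => N - α) ?_ ?_ ?_ ?_ ?_
    · intro a ha; simp only [Finset.mem_Icc] at *; omega
    · intro a ha; simp only [Finset.mem_Icc] at *; omega
    · intro a ha; simp only [Finset.mem_Icc] at ha; show N - (N - a) = a; omega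
    · intro a ha; simp only [Finset.mem_Icc] at ha; show N - (N - a) = a; omega
    · intro a ha; simp only [Finset.mem_Icc] at ha
      show t a = t (N - (N - a))
      congr 1
      omega
  have hpair : ∀ α ∈ Finset.Icc 1 (N - 1), t α + t (N - α) = -1 := by
    intro α hα
    rw [Finset.mem_Icc] at hα
    have h0 := eta_ne_zero N α
    have h1 : η N α - 1 ≠ 0 := sub_ne_zero.mpr (eta_ne_one N α hN hα.1 hα.2)
    have h2 : (η N α)⁻¹ - 1 ≠ 0 := sub_ne_zero.mpr (eta_inv_ne_one N α hN hα.1 hα.2)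
    have hc : η N (N - α) = (η N α)⁻¹ := eta_compl N α hN (by omega)
    have h1' : 1 - η N α ≠ 0 := fun h => h1 (by linear_combination -h)
    have hinv : (η N α)⁻¹ - 1 = (1 - η N α) / η N α := by field_simp
    show (η N α - 1) / (Complex.normSq (η N α - 1) : ℂ)
        + (η N (N - α) - 1) / (Complex.normSq (η N (N - α) - 1) : ℂ) = -1
    rw [normSq_eta, normSq_eta, hc, inv_inv, hinv]
    field_simp
    ring
  have htwo : (∑ α ∈ Finset.Icc 1 (N - 1), t α) + (∑ α ∈ Finset.Icc 1 (N - 1), t α)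
      = -((N : ℂ) - 1) := by
    nth_rewrite 2 [hrev]
    rw [← Finset.sum_add_distrib]
    rw [Finset.sum_congr rfl hpair, Finset.sum_const, Nat.card_Icc, nsmul_eq_mul]
    have : ((N - 1 + 1 - 1 : ℕ) : ℂ) = (N : ℂ) - 1 := by
      push_cast [Nat.sub_add_cancel (by omega : 1 ≤ N)]
      rw [Nat.cast_sub (by omega : 1 ≤ N)]
      push_cast; ring
    rw [this]; ring
  rw [hS]
  linear_combination htwo / 2
lemma gseq_rec (N : ℕ) (m : ℤ) :
    gseq N (m + 1) + gseq N (m - 1) - 2 * gseq N m = 1 := by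
  simp only [gseq]
  push_cast
  ring

lemma gseq_one_sub (N : ℕ) : gseq N 1 - gseq N 0 = -((N : ℂ) - 1) / 2 := by
  simp only [gseq]
  push_cast
  ring

lemma Fconst (N : ℕ) (hN : 2 ≤ N) :
    ∀ k : ℕ, k ≤ N → fseq N (k : ℤ) - gseq N (k : ℤ) = fseq N 0 - gseq N 0 := by
  intro k
  induction k using Nat.strong_induction_on with
  | _ k ih =>
    match k with
    | 0 => intro _; norm_num
    | 1 =>
      intro _
      have h1 := fseq_one_sub N hN
      have h2 := gseq_one_sub N
      push_cast
      linear_combination h1 - h2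
    | (j + 2) =>
      intro hk
      have h1 := ih (j + 1) (by omega) (by omega)
      have h0 := ih j (by omega) (by omega)
      have hrec := fseq_rec N hN ((j : ℤ) + 1) (by omega) (by omega)
      have grec := gseq_rec N ((j : ℤ) + 1)
      have e1 : ((j : ℤ) + 1) + 1 = ((j + 2 : ℕ) : ℤ) := by push_cast; ring
      have e2 : ((j : ℤ) + 1) - 1 = ((j : ℕ) : ℤ) := by push_cast; ring
      have e3 : ((j : ℤ) + 1) = ((j + 1 : ℕ) : ℤ) := by push_cast; ring
      rw [e1, e2, e3] at hrec grec
      linear_combination hrec - grec + 2 * h1 - h0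

theorem stmt_9 (N : ℕ) (hN : 2 ≤ N) (m : ℤ) (hm1 : 0 ≤ m) (hm2 : m ≤ N) :
    ∑ α ∈ Finset.Icc 1 (N - 1), (η N α) ^ m / (Complex.normSq (η N α - 1) : ℂ) =
      ((N : ℂ) ^ 2 - 1) / 12 - (m : ℂ) * ((N : ℂ) - (m : ℂ)) / 2 := by
  have hsum : ∑ k ∈ Finset.range N, (fseq N (k : ℤ) - gseq N (k : ℤ)) = 0 := by
    rw [Finset.sum_sub_distrib, sum_fseq N hN, sum_gseq N, sub_zero]
  have hconst : ∑ k ∈ Finset.range N, (fseq N (k : ℤ) - gseq N (k : ℤ))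
      = (N : ℂ) * (fseq N 0 - gseq N 0) := by
    rw [Finset.sum_congr rfl (fun k hk => Fconst N hN k (le_of_lt (Finset.mem_range.mp hk)))]
    rw [Finset.sum_const, Finset.card_range, nsmul_eq_mul]
  have hN0 : (N : ℂ) ≠ 0 := Nat.cast_ne_zero.mpr (by omega)
  have h00 : fseq N 0 - gseq N 0 = 0 := by
    have := hsum
    rw [hconst] at this
    exact (mul_eq_zero.mp this).resolve_left hN0
  have key : fseq N m = gseq N m := by
    have hm : m = ((m.toNat : ℕ) : ℤ) := by omega
    rw [hm]
    have := Fconst N hN m.toNat (by omega)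
    rw [h00] at this
    linear_combination this
  exact key
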